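/- If the coarse Menger conjecture holds for d = 3 and some fixed value of k (with separation constant ℓ), then it holds for that k and every d ≥ 3, with separation constant d·ℓ. Precisely: suppose for all graphs G and S,T ⊆ V(G), either there are k paths between S and T pairwise at distance (in G) at least 3, or there is a set X of at most k−1 vertices such that every S–T path contains a vertex at distance at most ℓ from X. Then for every d ≥ 3, every graph G, and all S,T ⊆ V(G), either there are k paths between S and T pairwise at distance at least d in G, or there is a set X of at most k−1 vertices such that every S–T path in G contains a vertex at distance at most d·ℓ from X in G. -/

import Mathlib

/-- The distance in `G` between vertex sets `A` and `B` is at least `d`: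
every walk from `A` to `B` has length at least `d`. -/
def SetDistGE {V : Type} (G : SimpleGraph V) (A B : Set V) (d : ℕ) : Prop :=
  ∀ ⦃x y : V⦄, x ∈ A → y ∈ B → ∀ w : G.Walk x y, d ≤ w.length

/-- The distance in `G` between `x` and `y` is at most `ℓ`. -/
def DistLE {V : Type} (G : SimpleGraph V) (x y : V) (ℓ : ℕ) : Prop :=
  ∃ w : G.Walk x y, w.length ≤ ℓ

/-- `P` is the vertex set of a path of `G` with one end in `S` and one end in `T`. -/
def IsSTPath {V : Type} (G : SimpleGraph V) (S T : Set V) (P : Set V) : Prop :=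
  ∃ (u v : V) (w : G.Walk u v), w.IsPath ∧ u ∈ S ∧ v ∈ T ∧ P = {x | x ∈ w.support}

/-- There are `k` paths between `S` and `T`, pairwise at distance at least `d`. -/
def HasKPaths {V : Type} (G : SimpleGraph V) (S T : Set V) (k d : ℕ) : Prop :=
  ∃ P : Fin k → Set V, (∀ i, IsSTPath G S T (P i)) ∧
    ∀ i j, i ≠ j → SetDistGE G (P i) (P j) d

/-- There is a set `X` of at most `m` vertices such that every path between `S` and `T`
contains a vertex with distance at most `ℓ` from some member of `X`. -/
def CoarseSeparator {V : Type} (G : SimpleGraph V) (S T : Set V) (m ℓ : ℕ) : Prop :=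
  ∃ X : Finset V, X.card ≤ m ∧
    ∀ (u v : V) (w : G.Walk u v), w.IsPath → u ∈ S → v ∈ T →
      ∃ y ∈ w.support, ∃ x ∈ X, DistLE G x y ℓ


open SimpleGraph

/-- Auxiliary: the `m`-th power of `G` (via walks of length `≤ m`). -/
def PowG {V : Type} (G : SimpleGraph V) (m : ℕ) : SimpleGraph V where
  Adj x y := x ≠ y ∧ ∃ w : G.Walk x y, w.length ≤ m
  symm := ⟨by rintro x y ⟨h, w, hw⟩; exact ⟨h.symm, w.reverse, by simpa using hw⟩⟩
  loopless := ⟨by rintro x ⟨h, -⟩; exact h rfl⟩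

lemma powg_le {V : Type} (G : SimpleGraph V) {m : ℕ} (hm : 1 ≤ m) : G ≤ PowG G m :=
  fun x y h => ⟨h.ne, Walk.cons h Walk.nil, by simpa using hm⟩

/-- Contraction: a `G`-walk gives a `PowG G m`-walk of roughly 1/m the length. -/
lemma contract {V : Type} {G : SimpleGraph V} {m : ℕ} (hm : 1 ≤ m) {x b : V}
    (p : G.Walk x b) : ∀ {a : V} (q : G.Walk a x), q.length ≤ m →
      ∃ w' : (PowG G m).Walk a b, m * w'.length ≤ q.length + p.length + (m - 1) := by
  induction p with
  | nil =>
    rename_i c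
    intro a q hq
    by_cases hab : a = c
    · subst hab; exact ⟨Walk.nil, by simp⟩
    · have h1 : 1 ≤ q.length := by
        rcases Nat.eq_zero_or_pos q.length with h0 | h0
        · exact absurd (Walk.eq_of_length_eq_zero h0) hab
        · exact h0
      exact ⟨Walk.cons (show (PowG G m).Adj a c from ⟨hab, q, hq⟩) Walk.nil, by simp; omega⟩
  | @cons x' y' b' h p ih =>
    intro a q hq
    rcases lt_or_eq_of_le hq with hlt | heq
    · obtain ⟨w', hw'⟩ := ih (q.concat h) (by rw [Walk.length_concat]; omega)
      exact ⟨w', by rw [Walk.length_concat] at hw'; simp [Walk.length_cons]; omega⟩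
    · by_cases hax : a = x'
      · subst hax
        obtain ⟨w', hw'⟩ := ih (Walk.cons h Walk.nil) (by simpa using hm)
        exact ⟨w', by simp at hw' ⊢; omega⟩
      · obtain ⟨w', hw'⟩ := ih (Walk.cons h Walk.nil) (by simpa using hm)
        refine ⟨Walk.cons (show (PowG G m).Adj a x' from ⟨hax, q, hq⟩) w', ?_⟩
        simp [Walk.length_cons, Nat.mul_add] at hw' ⊢; omega
/-- Expansion: a `PowG G m`-walk gives a `G`-walk at most `m` times as long. -/
lemma expand {V : Type} {G : SimpleGraph V} {m : ℕ} {u v : V}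
    (w : (PowG G m).Walk u v) : ∃ W : G.Walk u v, W.length ≤ m * w.length := by
  induction w with
  | nil => exact ⟨Walk.nil, by simp⟩
  | @cons u x v h p ih =>
    obtain ⟨q, hq⟩ := h.2
    obtain ⟨W, hW⟩ := ih
    exact ⟨q.append W, by rw [Walk.length_append, Walk.length_cons, Nat.mul_add]; omega⟩

/-- Expansion with support control. -/
lemma expand3 {V : Type} {G : SimpleGraph V} {m : ℕ} {u v : V}
    (w : (PowG G m).Walk u v) : ∃ W : G.Walk u v,
      ∀ x ∈ W.support, ∃ a ∈ w.support, ∃ g : G.Walk a x, 2 * g.length ≤ m := by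
  classical
  induction w with
  | nil =>
    refine ⟨Walk.nil, ?_⟩
    rintro x hx
    simp only [Walk.support_nil, List.mem_singleton] at hx
    subst hx
    exact ⟨x, by simp, Walk.nil, by simp⟩
  | @cons u' z v' h p ih =>
    obtain ⟨q, hq⟩ := h.2
    obtain ⟨W, hW⟩ := ih
    refine ⟨q.append W, ?_⟩
    intro x hx
    rw [Walk.mem_support_append_iff] at hx
    rcases hx with hx | hx
    · have hsplit : (q.takeUntil x hx).length + (q.dropUntil x hx).length = q.length := by
        conv_rhs => rw [← Walk.take_spec q hx]
        rw [Walk.length_append]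
      by_cases hc : 2 * (q.takeUntil x hx).length ≤ m
      · exact ⟨u', by simp, q.takeUntil x hx, hc⟩
      · refine ⟨z, by simp, (q.dropUntil x hx).reverse, by simp; omega⟩
    · obtain ⟨a, ha, g, hg⟩ := hW x hx
      exact ⟨a, by simp [ha], g, hg⟩

/-- If the coarse Menger conjecture holds for `d = 3` and `k` (with constant `ℓ`),
then it holds for the same `k` and every `d ≥ 3`, with constant `d * ℓ`. -/
theorem stmt_6 (k ℓ : ℕ) (hk : 1 ≤ k)
    (h3 : ∀ (V : Type) (G : SimpleGraph V) (S T : Set V),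
      HasKPaths G S T k 3 ∨ CoarseSeparator G S T (k - 1) ℓ) :
    ∀ d : ℕ, 3 ≤ d → ∀ (V : Type) (G : SimpleGraph V) (S T : Set V),
      HasKPaths G S T k d ∨ CoarseSeparator G S T (k - 1) (d * ℓ) := by
  intro d hd V G S T
  classical
  set m := d - 1 with hm_def
  have hm : 1 ≤ m := by omega
  rcases h3 V (PowG G m) S T with ⟨P, hP, hdist⟩ | ⟨X, hX, hsep⟩
  · left
    choose u v w hw hu hv hPeq using hP
    choose W hWprop using fun i => expand3 (w i)
    refine ⟨fun i => {x | x ∈ (W i).bypass.support}, fun i => ⟨u i, v i, (W i).bypass,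
      (W i).bypass_isPath, hu i, hv i, rfl⟩, fun i j hij => ?_⟩
    intro x y hx hy wxy
    obtain ⟨a, ha, g, hg⟩ := hWprop i x ((W i).support_bypass_subset hx)
    obtain ⟨b, hb, g', hg'⟩ := hWprop j y ((W j).support_bypass_subset hy)
    obtain ⟨w', hw'⟩ := contract hm (g.append (wxy.append g'.reverse)) Walk.nil (by simp)
    have h3' : 3 ≤ w'.length := by
      refine hdist i j hij ?_ ?_ w'
      · rw [hPeq i]; exact ha
      · rw [hPeq j]; exact hb
    simp only [Walk.length_nil, Walk.length_append, Walk.length_reverse,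
      Nat.zero_add] at hw'
    have h3m : m * 3 ≤ m * w'.length := Nat.mul_le_mul_left m h3'
    omega
  · right
    refine ⟨X, hX, ?_⟩
    intro a c wp hp ha hc
    have hWH := (wp.mapLe (powg_le G hm)).bypass
    obtain ⟨y, hy, x, hxX, wxy, hwxy⟩ := hsep a c (wp.mapLe (powg_le G hm)).bypass
      (Walk.bypass_isPath _) ha hc
    have hy' : y ∈ wp.support := by
      have := (wp.mapLe (powg_le G hm)).support_bypass_subset hy
      rw [Walk.mapLe] at this
      rw [Walk.support_map] at this
      simpa using this
    obtain ⟨Wxy, hWxy⟩ := expand wxy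
    refine ⟨y, hy', x, hxX, Wxy, ?_⟩
    calc Wxy.length ≤ m * wxy.length := hWxy
      _ ≤ m * ℓ := Nat.mul_le_mul_left m hwxy
      _ ≤ d * ℓ := Nat.mul_le_mul_right ℓ (by omega)
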